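/- The graph Yao(θ,2f+1) is an f-faulty-degree (1/(cos θ − sin θ))-spanner for S: for every edge set F of Yao(θ,2f+1) of maximum degree at most f and all p, q ∈ S, the shortest-path distance between p and q in Yao(θ,2f+1) \ F is at most (1/(cos θ − sin θ)) times the shortest-path distance between p and q in K_S \ F. -/

import Mathlib

open Real

/-- Length of a walk in a graph whose vertices lie in a metric space:
the sum of the metric distances of consecutive vertices. -/
noncomputable def wlen {V : Type*} [PseudoMetricSpace V] {G : SimpleGraph V} {u v : V}
    (w : G.Walk u v) : ℝ :=
  (w.darts.map fun d : G.Dart => dist d.toProd.1 d.toProd.2).sum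

/-- Shortest-path distance between two vertices of a metrically weighted graph. -/
noncomputable def gdist {V : Type*} [PseudoMetricSpace V] (G : SimpleGraph V) (p q : V) : ℝ :=
  sInf {l : ℝ | ∃ w : G.Walk p q, wlen w = l}

/-- The set `F` of edges, viewed as a graph, has maximum degree at most `f`. -/
def maxDegLe {V : Type*} (F : Set (Sym2 V)) (f : ℕ) : Prop :=
  ∀ v : V, {e | e ∈ F ∧ v ∈ e}.encard ≤ (f : ℕ∞)

/-- The set of points of `S`, as a type. -/
abbrev Pts {d : ℕ} (S : Finset (EuclideanSpace ℝ (Fin d))) : Type :=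
  {x : EuclideanSpace ℝ (Fin d) // x ∈ S}


lemma geo_aux {E : Type*} [NormedAddCommGroup E] [InnerProductSpace ℝ E] {θ : ℝ}
    (hθ0 : 0 < θ) (hθ1 : θ < π / 4) {a b : E} (ha : a ≠ 0) (hb : b ≠ 0)
    (hangle : InnerProductGeometry.angle a b ≤ θ) (hab : ‖a‖ ≤ ‖b‖) :
    ‖b - a‖ ≤ ‖b‖ - (Real.cos θ - Real.sin θ) * ‖a‖ := by
  have hpi := Real.pi_pos
  have hθpi : θ ≤ π := by linarith
  have hs : 0 < Real.sin θ := Real.sin_pos_of_pos_of_lt_pi hθ0 (by linarith)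
  have hc1 : Real.cos θ ≤ 1 := Real.cos_le_one θ
  have hcc : Real.cos θ ≤ Real.cos (InnerProductGeometry.angle a b) :=
    Real.cos_le_cos_of_nonneg_of_le_pi (InnerProductGeometry.angle_nonneg a b) hθpi hangle
  have hna : 0 < ‖a‖ := norm_pos_iff.mpr ha
  have hnb : 0 < ‖b‖ := norm_pos_iff.mpr hb
  have hinner : (inner ℝ a b : ℝ) = Real.cos (InnerProductGeometry.angle a b) * (‖a‖ * ‖b‖) := by
    rw [InnerProductGeometry.cos_angle]
    field_simp
  have hinge : Real.cos θ * (‖a‖ * ‖b‖) ≤ (inner ℝ a b : ℝ) := by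
    rw [hinner]
    exact mul_le_mul_of_nonneg_right hcc (by positivity)
  have hsq : ‖b - a‖ ^ 2 = ‖b‖ ^ 2 - 2 * (inner ℝ a b : ℝ) + ‖a‖ ^ 2 := by
    rw [norm_sub_sq_real, real_inner_comm]
  have hpyth := Real.sin_sq_add_cos_sq θ
  have hR : 0 ≤ ‖b‖ - (Real.cos θ - Real.sin θ) * ‖a‖ := by nlinarith
  have hcb : Real.cos θ * ‖a‖ ≤ ‖b‖ := by nlinarith
  have h3 : 0 ≤ Real.sin θ * ‖a‖ * (‖b‖ - Real.cos θ * ‖a‖) :=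
    mul_nonneg (mul_nonneg hs.le hna.le) (by linarith)
  have h2 : ‖b - a‖ ^ 2 ≤ (‖b‖ - (Real.cos θ - Real.sin θ) * ‖a‖) ^ 2 := by
    nlinarith [hinge, hpyth, h3, hsq]
  nlinarith [norm_nonneg (b - a)]

lemma wlen_nil {V : Type*} [PseudoMetricSpace V] {G : SimpleGraph V} {u : V} :
    wlen (SimpleGraph.Walk.nil : G.Walk u u) = 0 := by
  simp [wlen]

lemma wlen_cons {V : Type*} [PseudoMetricSpace V] {G : SimpleGraph V} {u v x : V}
    (h : G.Adj u v) (w : G.Walk v x) :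
    wlen (SimpleGraph.Walk.cons h w) = dist u v + wlen w := by
  simp [wlen, SimpleGraph.Walk.darts_cons]

lemma wlen_append {V : Type*} [PseudoMetricSpace V] {G : SimpleGraph V} {u v x : V}
    (w1 : G.Walk u v) (w2 : G.Walk v x) :
    wlen (w1.append w2) = wlen w1 + wlen w2 := by
  simp [wlen, SimpleGraph.Walk.darts_append]

lemma wlen_nonneg {V : Type*} [PseudoMetricSpace V] {G : SimpleGraph V} {u v : V}
    (w : G.Walk u v) : 0 ≤ wlen w := by
  apply List.sum_nonneg
  intro x hx
  obtain ⟨d, _, rfl⟩ := List.mem_map.mp hx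
  exact dist_nonneg

theorem stmt15 {d k : ℕ} (f : ℕ) (θ : ℝ) (hθ0 : 0 < θ) (hθ1 : θ < π / 4)
    -- a collection of k cones with apex at the origin, angular diameter at most θ,
    -- covering ℝ^d
    (cone : Fin k → Set (EuclideanSpace ℝ (Fin d)))
    (hcone : ∀ i, ∀ x ∈ cone i, ∀ t : ℝ, 0 ≤ t → t • x ∈ cone i)
    (hang : ∀ i, ∀ x ∈ cone i, x ≠ 0 → ∀ y ∈ cone i, y ≠ 0 →
      InnerProductGeometry.angle x y ≤ θ)
    (hcover : ∀ x : EuclideanSpace ℝ (Fin d), ∃ i, x ∈ cone i)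
    (S : Finset (EuclideanSpace ℝ (Fin d)))
    -- for each p and each cone, N p i is the set of min(2f+1, |S_{p,C}|) points of
    -- S_{p,C} that are closest to p in Euclidean distance
    (N : Pts S → Fin k → Set (EuclideanSpace ℝ (Fin d)))
    (hNsub : ∀ p i, N p i ⊆ {x | x ∈ S ∧ x ≠ ↑p ∧ x - ↑p ∈ cone i})
    (hNcard : ∀ p i, (N p i).ncard =
      min (2 * f + 1) {x | x ∈ S ∧ x ≠ ↑p ∧ x - ↑p ∈ cone i}.ncard)
    (hNclose : ∀ p i, ∀ r ∈ N p i, ∀ x : EuclideanSpace ℝ (Fin d),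
      x ∈ S → x ≠ ↑p → x - ↑p ∈ cone i → x ∉ N p i →
      dist (↑p : EuclideanSpace ℝ (Fin d)) r ≤ dist (↑p : EuclideanSpace ℝ (Fin d)) x)
    -- the graph Yao(θ, 2f+1)
    (Yao : SimpleGraph (Pts S))
    (hYao : ∀ x y : Pts S, Yao.Adj x y ↔ x ≠ y ∧ ∃ i, (↑y ∈ N x i ∨ ↑x ∈ N y i)) :
    ∀ F : Set (Sym2 (Pts S)), F ⊆ Yao.edgeSet → maxDegLe F f →
      ∀ p q : Pts S, gdist (Yao.deleteEdges F) p q ≤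
        (1 / (Real.cos θ - Real.sin θ)) *
          gdist ((⊤ : SimpleGraph (Pts S)).deleteEdges F) p q := by
  intro F hF hdeg
  have hpi := Real.pi_pos
  have hsc : Real.sin θ < Real.cos θ := by
    rw [← Real.sin_pi_div_two_sub]
    exact Real.sin_lt_sin_of_lt_of_le_pi_div_two (by linarith) (by linarith) (by linarith)
  have hcs : 0 < Real.cos θ - Real.sin θ := by linarith
  have hspos : 0 < Real.sin θ := Real.sin_pos_of_pos_of_lt_pi hθ0 (by linarith)
  have hc1 : Real.cos θ ≤ 1 := Real.cos_le_one θ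
  set t : ℝ := 1 / (Real.cos θ - Real.sin θ) with ht
  have htpos : 0 < t := by positivity
  have ht1 : 1 ≤ t := by rw [ht, le_div_iff₀ hcs]; nlinarith
  have htcs : t * (Real.cos θ - Real.sin θ) = 1 := by
    rw [ht]; field_simp
  -- the key lemma: every surviving K-edge is spanned by a short path in Yao \ F
  have key : ∀ n : ℕ, ∀ p q : Pts S, p ≠ q → s(p, q) ∉ F →
      ({x : Pts S × Pts S | dist (x.1 : EuclideanSpace ℝ (Fin d)) (x.2 : EuclideanSpace ℝ (Fin d))
        < dist (p : EuclideanSpace ℝ (Fin d)) (q : EuclideanSpace ℝ (Fin d))}).ncard ≤ n →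
      ∃ w : (Yao.deleteEdges F).Walk p q,
        wlen w ≤ t * dist (p : EuclideanSpace ℝ (Fin d)) (q : EuclideanSpace ℝ (Fin d)) := by
    intro n
    induction n using Nat.strong_induction_on with
    | _ n IH =>
    intro p q hpq hpqF hn
    have hqp : (q : EuclideanSpace ℝ (Fin d)) ≠ (p : EuclideanSpace ℝ (Fin d)) :=
      fun h => hpq (Subtype.coe_injective h).symm
    obtain ⟨i, hi⟩ := hcover ((q : EuclideanSpace ℝ (Fin d)) - (p : EuclideanSpace ℝ (Fin d)))
    have hqA : (q : EuclideanSpace ℝ (Fin d)) ∈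
        {x : EuclideanSpace ℝ (Fin d) | x ∈ S ∧ x ≠ ↑p ∧ x - ↑p ∈ cone i} := ⟨q.2, hqp, hi⟩
    by_cases hqN : (q : EuclideanSpace ℝ (Fin d)) ∈ N p i
    · -- direct edge p-q in Yao \ F
      have hadj : (Yao.deleteEdges F).Adj p q := by
        rw [SimpleGraph.deleteEdges_adj, hYao]
        exact ⟨⟨hpq, i, Or.inl hqN⟩, hpqF⟩
      refine ⟨SimpleGraph.Walk.cons hadj SimpleGraph.Walk.nil, ?_⟩
      rw [wlen_cons, wlen_nil, Subtype.dist_eq]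
      have hd : (0:ℝ) ≤ dist (p : EuclideanSpace ℝ (Fin d)) (q : EuclideanSpace ℝ (Fin d)) :=
        dist_nonneg
      nlinarith
    · -- q not among the 2f+1 closest; find a good intermediate r
      have hAfin : ({x : EuclideanSpace ℝ (Fin d) | x ∈ S ∧ x ≠ ↑p ∧ x - ↑p ∈ cone i}).Finite :=
        S.finite_toSet.subset (fun x hx => hx.1)
      have hNc : (N p i).ncard = 2 * f + 1 := by
        rcases Nat.lt_or_ge ({x : EuclideanSpace ℝ (Fin d) | x ∈ S ∧ x ≠ ↑p ∧ x - ↑p ∈ cone i}).ncard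
          (2 * f + 1) with h | h
        · exfalso
          have h1 : ({x : EuclideanSpace ℝ (Fin d) | x ∈ S ∧ x ≠ ↑p ∧ x - ↑p ∈ cone i}).ncard ≤
              (N p i).ncard := by rw [hNcard p i]; omega
          have h2 := Set.eq_of_subset_of_ncard_le (hNsub p i) h1 hAfin
          exact hqN (h2 ▸ hqA)
        · rw [hNcard p i]; omega
      set N' : Set (Pts S) := {x : Pts S | (x : EuclideanSpace ℝ (Fin d)) ∈ N p i} with hN'
      have hN'img : Subtype.val '' N' = N p i := by
        ext x
        constructor
        · rintro ⟨y, hy, rfl⟩; exact hy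
        · intro hx; exact ⟨⟨x, (hNsub p i hx).1⟩, hx, rfl⟩
      have hN'c : N'.ncard = 2 * f + 1 := by
        rw [← hNc, ← hN'img, Set.ncard_image_of_injective _ Subtype.val_injective]
      -- degree counting
      have degcount : ∀ v : Pts S, ({e : Sym2 (Pts S) | e ∈ F ∧ v ∈ e}).ncard ≤ f := by
        intro v
        obtain ⟨_, n₀, he, hnf⟩ := Set.encard_le_coe_iff.mp (hdeg v)
        rw [Set.ncard_def, he, ENat.toNat_coe]
        exact hnf
      have hFpfin : ∀ v : Pts S, ({e : Sym2 (Pts S) | e ∈ F ∧ v ∈ e}).Finite :=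
        fun v => Set.finite_of_encard_le_coe (hdeg v)
      set Bad1 : Set (Pts S) := {x ∈ N' | s(p, x) ∈ F} with hB1def
      set Bad2 : Set (Pts S) := {x ∈ N' | s(x, q) ∈ F} with hB2def
      have hneP : ∀ x ∈ N', x ≠ p := by
        intro x hx h
        exact (hNsub p i hx).2.1 (by rw [h])
      have hB1 : Bad1.ncard ≤ f := by
        refine le_trans (Set.ncard_le_ncard_of_injOn (fun x => s(p, x)) ?_ ?_ (hFpfin p))
          (degcount p)
        · rintro x ⟨hx, hxF⟩
          exact ⟨hxF, Sym2.mem_mk_left p x⟩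
        · intro x1 hx1 x2 hx2 hxe
          exact Sym2.congr_right.mp hxe
      have hB2 : Bad2.ncard ≤ f := by
        refine le_trans (Set.ncard_le_ncard_of_injOn (fun x => s(x, q)) ?_ ?_ (hFpfin q))
          (degcount q)
        · rintro x ⟨hx, hxF⟩
          exact ⟨hxF, Sym2.mem_mk_right x q⟩
        · intro x1 hx1 x2 hx2 hxe
          exact Sym2.congr_left.mp hxe
      have hunion : (Bad1 ∪ Bad2).ncard ≤ 2 * f :=
        le_trans (Set.ncard_union_le _ _) (by omega)
      have hex : ∃ r : Pts S, r ∈ N' ∧ r ∉ Bad1 ∪ Bad2 := by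
        by_contra h
        push_neg at h
        have hsub : N' ⊆ Bad1 ∪ Bad2 := fun x hx => h x hx
        have := Set.ncard_le_ncard hsub (Set.toFinite _)
        omega
      obtain ⟨r, hrN', hrB⟩ := hex
      have hrN : (r : EuclideanSpace ℝ (Fin d)) ∈ N p i := hrN'
      have hprF : s(p, r) ∉ F := fun hmem => hrB (Or.inl ⟨hrN', hmem⟩)
      have hrqF : s(r, q) ∉ F := fun hmem => hrB (Or.inr ⟨hrN', hmem⟩)
      have hrp : (r : EuclideanSpace ℝ (Fin d)) ≠ (p : EuclideanSpace ℝ (Fin d)) :=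
        (hNsub p i hrN).2.1
      have hpr_ne : p ≠ r := fun h => hrp (by rw [h])
      have hrq_ne : r ≠ q := by
        intro h
        exact hqN (h ▸ hrN)
      -- geometry
      have hclose := hNclose p i _ hrN (q : EuclideanSpace ℝ (Fin d)) q.2 hqp hi hqN
      have hnorm_a : ‖(r : EuclideanSpace ℝ (Fin d)) - (p : EuclideanSpace ℝ (Fin d))‖ =
          dist (p : EuclideanSpace ℝ (Fin d)) (r : EuclideanSpace ℝ (Fin d)) :=
        (dist_eq_norm' _ _).symm
      have hnorm_b : ‖(q : EuclideanSpace ℝ (Fin d)) - (p : EuclideanSpace ℝ (Fin d))‖ =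
          dist (p : EuclideanSpace ℝ (Fin d)) (q : EuclideanSpace ℝ (Fin d)) :=
        (dist_eq_norm' _ _).symm
      have hgeo0 := geo_aux hθ0 hθ1 (sub_ne_zero.mpr hrp) (sub_ne_zero.mpr hqp)
        (hang i _ (hNsub p i hrN).2.2 (sub_ne_zero.mpr hrp) _ hi (sub_ne_zero.mpr hqp))
        (by rw [hnorm_a, hnorm_b]; exact hclose)
      rw [hnorm_a, hnorm_b] at hgeo0
      have hsub_eq : ((q : EuclideanSpace ℝ (Fin d)) - ↑p) - ((r : EuclideanSpace ℝ (Fin d)) - ↑p)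
          = (q : EuclideanSpace ℝ (Fin d)) - (r : EuclideanSpace ℝ (Fin d)) := by abel
      rw [hsub_eq, ← dist_eq_norm'] at hgeo0
      -- hgeo0 : dist r q ≤ dist p q - (cos θ - sin θ) * dist p r
      have hprpos : 0 < dist (p : EuclideanSpace ℝ (Fin d)) (r : EuclideanSpace ℝ (Fin d)) :=
        dist_pos.mpr (fun h => hrp h.symm)
      have hlt : dist (r : EuclideanSpace ℝ (Fin d)) (q : EuclideanSpace ℝ (Fin d)) <
          dist (p : EuclideanSpace ℝ (Fin d)) (q : EuclideanSpace ℝ (Fin d)) := by nlinarith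
      -- recursion measure
      have hss : {x : Pts S × Pts S | dist (x.1 : EuclideanSpace ℝ (Fin d)) (x.2 : EuclideanSpace ℝ (Fin d))
            < dist (r : EuclideanSpace ℝ (Fin d)) (q : EuclideanSpace ℝ (Fin d))} ⊂
          {x : Pts S × Pts S | dist (x.1 : EuclideanSpace ℝ (Fin d)) (x.2 : EuclideanSpace ℝ (Fin d))
            < dist (p : EuclideanSpace ℝ (Fin d)) (q : EuclideanSpace ℝ (Fin d))} := by
        constructor
        · intro x hx
          exact lt_trans hx hlt
        · intro hcon
          have h8 := hcon (show ((r, q) : Pts S × Pts S) ∈ _ from hlt)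
          simp only [Set.mem_setOf_eq] at h8
          exact lt_irrefl _ h8
      have hm : ({x : Pts S × Pts S | dist (x.1 : EuclideanSpace ℝ (Fin d)) (x.2 : EuclideanSpace ℝ (Fin d))
          < dist (r : EuclideanSpace ℝ (Fin d)) (q : EuclideanSpace ℝ (Fin d))}).ncard < n :=
        lt_of_lt_of_le (Set.ncard_lt_ncard hss (Set.toFinite _)) hn
      obtain ⟨w2, hw2⟩ := IH _ hm r q hrq_ne hrqF le_rfl
      have hadj : (Yao.deleteEdges F).Adj p r := by
        rw [SimpleGraph.deleteEdges_adj, hYao]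
        exact ⟨⟨hpr_ne, i, Or.inl hrN⟩, hprF⟩
      refine ⟨SimpleGraph.Walk.cons hadj w2, ?_⟩
      rw [wlen_cons, Subtype.dist_eq]
      have h6 := mul_le_mul_of_nonneg_left hgeo0 htpos.le
      have h7 : t * dist (r : EuclideanSpace ℝ (Fin d)) (q : EuclideanSpace ℝ (Fin d)) ≤
          t * dist (p : EuclideanSpace ℝ (Fin d)) (q : EuclideanSpace ℝ (Fin d)) -
          dist (p : EuclideanSpace ℝ (Fin d)) (r : EuclideanSpace ℝ (Fin d)) := by
        calc t * dist (r : EuclideanSpace ℝ (Fin d)) (q : EuclideanSpace ℝ (Fin d)) ≤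
            t * (dist (p : EuclideanSpace ℝ (Fin d)) (q : EuclideanSpace ℝ (Fin d)) -
              (Real.cos θ - Real.sin θ) *
              dist (p : EuclideanSpace ℝ (Fin d)) (r : EuclideanSpace ℝ (Fin d))) := h6
          _ = t * dist (p : EuclideanSpace ℝ (Fin d)) (q : EuclideanSpace ℝ (Fin d)) -
              t * (Real.cos θ - Real.sin θ) *
              dist (p : EuclideanSpace ℝ (Fin d)) (r : EuclideanSpace ℝ (Fin d)) := by ring
          _ = _ := by rw [htcs, one_mul]
      linarith
  -- lift to walks
  have walkmap : ∀ (u v : Pts S) (w : ((⊤ : SimpleGraph (Pts S)).deleteEdges F).Walk u v),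
      ∃ w' : (Yao.deleteEdges F).Walk u v, wlen w' ≤ t * wlen w := by
    intro u v w
    induction w with
    | nil => exact ⟨SimpleGraph.Walk.nil, by rw [wlen_nil, wlen_nil, mul_zero]⟩
    | @cons a b cc h w ih =>
      obtain ⟨w2, hw2⟩ := ih
      rw [SimpleGraph.deleteEdges_adj] at h
      obtain ⟨w1, hw1⟩ := key _ a b h.1.ne h.2 le_rfl
      refine ⟨w1.append w2, ?_⟩
      rw [wlen_append, wlen_cons, mul_add]
      exact add_le_add hw1 hw2
  intro p q
  unfold gdist
  set L : Set ℝ := {l : ℝ | ∃ w : ((⊤ : SimpleGraph (Pts S)).deleteEdges F).Walk p q, wlen w = l}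
    with hLdef
  set L' : Set ℝ := {l : ℝ | ∃ w : (Yao.deleteEdges F).Walk p q, wlen w = l} with hL'def
  have hbdd : BddBelow L' := ⟨0, by rintro l ⟨w, rfl⟩; exact wlen_nonneg w⟩
  by_cases hLn : L.Nonempty
  · have hle : ∀ l ∈ L, sInf L' ≤ t * l := by
      rintro l ⟨w, rfl⟩
      obtain ⟨w', hw'⟩ := walkmap p q w
      exact le_trans (csInf_le hbdd ⟨w', rfl⟩) hw'
    have hdiv : sInf L' / t ≤ sInf L := by
      apply le_csInf hLn
      intro l hl
      rw [div_le_iff₀ htpos]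
      calc sInf L' ≤ t * l := hle l hl
        _ = l * t := mul_comm _ _
    rw [div_le_iff₀ htpos] at hdiv
    calc sInf L' ≤ sInf L * t := hdiv
      _ = t * sInf L := mul_comm _ _
  · have hL0 : L = ∅ := Set.not_nonempty_iff_eq_empty.mp hLn
    have hmono : Yao.deleteEdges F ≤ (⊤ : SimpleGraph (Pts S)).deleteEdges F := by
      intro a b hab
      rw [SimpleGraph.deleteEdges_adj] at hab ⊢
      exact ⟨hab.1.ne, hab.2⟩
    have hL'0 : L' = ∅ := by
      rw [Set.eq_empty_iff_forall_notMem]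
      rintro l ⟨w, rfl⟩
      exact hLn ⟨wlen (w.mapLe hmono), w.mapLe hmono, rfl⟩
    rw [hL0, hL'0, Real.sInf_empty, mul_zero]
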